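/- Let T_n be a random recursive tree (with arbitrary distribution over recursive trees on [n]), let T̃_n be the randomly relabeled tree, and let t̃_n be a labeled tree on alphabet U_n with P(T̃_n = t̃_n) > 0. Then for any node u ∈ U_n, the conditional probability that u is the root, P(T̃_1 = {u} | T̃_n = t̃_n), equals L(u, t̃_n) / ∑_{v ∈ U_n} L(v, t̃_n), where L(u, t̃_n) = (1/#Eq(u, t̃_n)) ∑_{t ∈ recur(t̃_n, u)} P(T_n = t), recur(t̃_n, u) is the set of recursive trees t such that (t, 1) has the same rooted shape as (t̃_n, u), and Eq(u, t̃_n) is the set of vertices v with (t̃_n, v) having the same rooted shape as (t̃_n, u). -/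

import Mathlib

open scoped Classical
open SimpleGraph Finset

/-- A recursive tree on `Fin n`: a tree such that the nodes `{0, ..., k-1}` induce a
connected subgraph for every `k ≥ 1`. Node `0` is the root (first arrival). -/
def IsRecursive (n : ℕ) (G : SimpleGraph (Fin n)) : Prop :=
  G.IsTree ∧ ∀ k : ℕ, 1 ≤ k → (G.induce {i : Fin n | i.val < k}).Connected

section Aux

variable {n : ℕ}

/-- Build a graph isomorphism from a permutation mapping `G` onto `t`. -/
def isoOfMapEq {G t : SimpleGraph (Fin n)} {π : Equiv.Perm (Fin n)}
    (h : G.map π.toEmbedding = t) : G ≃g t where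
  toEquiv := π
  map_rel_iff' := by
    intro a b
    subst h
    exact SimpleGraph.map_adj_apply (f := π.toEmbedding)

lemma map_eq_of_iso {G t : SimpleGraph (Fin n)} (e : G ≃g t) :
    G.map (e.toEquiv : Equiv.Perm (Fin n)).toEmbedding = t := by
  ext x y
  simp only [SimpleGraph.map_adj]
  constructor
  · rintro ⟨a, b, hab, rfl, rfl⟩
    exact e.map_rel_iff.mpr hab
  · intro h
    exact ⟨e.symm x, e.symm y, e.symm.map_rel_iff.mpr (by simpa using h), by simp, by simp⟩

/-- The automorphism group of `t` as a subgroup of permutations. -/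
def autSub (t : SimpleGraph (Fin n)) : Subgroup (Equiv.Perm (Fin n)) where
  carrier := {π | t.map π.toEmbedding = t}
  one_mem' := by
    show t.map ((1 : Equiv.Perm (Fin n)) : Fin n ≃ Fin n).toEmbedding = t
    rw [show ((1 : Equiv.Perm (Fin n)) : Fin n ≃ Fin n) = Equiv.refl (Fin n) from rfl,
      Equiv.refl_toEmbedding]
    exact SimpleGraph.map_id _
  mul_mem' := by
    intro π σ hπ hσ
    show t.map (π * σ).toEmbedding = t
    rw [Equiv.Perm.mul_def, Equiv.trans_toEmbedding, Function.Embedding.coe_trans, ← SimpleGraph.map_map, hσ, hπ]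
  inv_mem' := by
    intro π hπ
    show t.map π⁻¹.toEmbedding = t
    have : (t.map π.toEmbedding).map π⁻¹.toEmbedding = t.map π⁻¹.toEmbedding := by rw [hπ]
    rw [SimpleGraph.map_map, ← Function.Embedding.coe_trans, show π.toEmbedding.trans π⁻¹.toEmbedding
      = (π.trans π⁻¹).toEmbedding from (Equiv.trans_toEmbedding _ _).symm, Equiv.Perm.inv_def,
      Equiv.self_trans_symm, Equiv.refl_toEmbedding, Function.Embedding.coe_refl, SimpleGraph.map_id] at this
    rw [Equiv.Perm.inv_def]
    exact this.symm


lemma map_mul_emb (G : SimpleGraph (Fin n)) (π σ : Equiv.Perm (Fin n)) :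
    G.map (π * σ).toEmbedding = (G.map σ.toEmbedding).map π.toEmbedding := by
  rw [Equiv.Perm.mul_def, Equiv.trans_toEmbedding, SimpleGraph.map_map, Function.Embedding.coe_trans]

lemma map_inv_eq {G t : SimpleGraph (Fin n)} {π : Equiv.Perm (Fin n)}
    (h : G.map π.toEmbedding = t) : t.map (π⁻¹ : Equiv.Perm (Fin n)).toEmbedding = G := by
  rw [← h, ← map_mul_emb, inv_mul_cancel,
    show ((1 : Equiv.Perm (Fin n)) : Fin n ≃ Fin n) = Equiv.refl (Fin n) from rfl,
    Equiv.refl_toEmbedding]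
  exact SimpleGraph.map_id _

lemma orbit_eq (t : SimpleGraph (Fin n)) (w : Fin n) :
    {v : Fin n | ∃ e : t ≃g t, e w = v} = MulAction.orbit (autSub t) w := by
  ext v
  constructor
  · rintro ⟨e, rfl⟩
    exact ⟨⟨e.toEquiv, map_eq_of_iso e⟩, rfl⟩
  · rintro ⟨⟨π, hπ⟩, rfl⟩
    exact ⟨isoOfMapEq hπ, rfl⟩

lemma count_key (t G : SimpleGraph (Fin n)) (r w : Fin n) :
    (Finset.univ.filter (fun π : Equiv.Perm (Fin n) =>
        G.map π.toEmbedding = t ∧ π r = w)).card *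
      Fintype.card (MulAction.orbit (autSub t) w) =
    Fintype.card (autSub t) * (if ∃ e : G ≃g t, e r = w then 1 else 0) := by
  by_cases h : ∃ e : G ≃g t, e r = w
  · obtain ⟨e, he⟩ := h
    have h0 : G.map (e.toEquiv : Equiv.Perm (Fin n)).toEmbedding = t := map_eq_of_iso e
    set π0 : Equiv.Perm (Fin n) := e.toEquiv with hπ0
    have hinv : π0⁻¹ w = r := by
      rw [Equiv.Perm.inv_def]
      exact (Equiv.symm_apply_eq _).2 he.symm
    have hcard : (Finset.univ.filter (fun π : Equiv.Perm (Fin n) =>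
        G.map π.toEmbedding = t ∧ π r = w)).card
        = Fintype.card (MulAction.stabilizer (autSub t) w) := by
      rw [← Fintype.card_subtype]
      refine Fintype.card_congr
        { toFun := fun p => ⟨⟨p.1 * π0⁻¹, ?_⟩, ?_⟩
          invFun := fun s => ⟨(s : Equiv.Perm (Fin n)) * π0, ?_, ?_⟩
          left_inv := ?_
          right_inv := ?_ }
      · show t.map _ = t
        rw [map_mul_emb, map_inv_eq h0, p.2.1]
      · show (p.1 * π0⁻¹) • w = w
        rw [Equiv.Perm.smul_def, Equiv.Perm.mul_apply, hinv]
        exact p.2.2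
      · show G.map _ = t
        rw [map_mul_emb, h0]
        exact s.1.2
      · show ((s : Equiv.Perm (Fin n)) * π0) r = w
        rw [Equiv.Perm.mul_apply, show π0 r = w from he]
        exact s.2
      · intro p
        apply Subtype.ext
        show p.1 * π0⁻¹ * π0 = p.1
        group
      · intro s
        apply Subtype.ext
        apply Subtype.ext
        show (s : Equiv.Perm (Fin n)) * π0 * π0⁻¹ = (s : Equiv.Perm (Fin n))
        group
    rw [hcard, if_pos ⟨e, he⟩, mul_one, mul_comm]
    exact MulAction.card_orbit_mul_card_stabilizer_eq_card_group (autSub t) w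
  · rw [if_neg h, mul_zero, Finset.card_eq_zero.2, zero_mul]
    rw [Finset.filter_eq_empty_iff]
    rintro π - ⟨h1, h2⟩
    exact h ⟨isoOfMapEq h1, h2⟩

end Aux

theorem stmt13 (n : ℕ) (hn : 0 < n) (P : SimpleGraph (Fin n) → ℝ)
    (hP0 : ∀ G, 0 ≤ P G) (hsupp : ∀ G, P G ≠ 0 → IsRecursive n G)
    (hP1 : ∑ G, P G = 1)
    (t : SimpleGraph (Fin n)) (u : Fin n)
    (L : Fin n → ℝ)
    (hL : ∀ w : Fin n,
      L w = (Nat.card {v : Fin n | ∃ e : t ≃g t, e w = v} : ℝ)⁻¹ *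
        ∑ G, if IsRecursive n G ∧ ∃ e : G ≃g t, e ⟨0, hn⟩ = w then P G else 0)
    (hpos : 0 < ∑ G, ∑ π : Equiv.Perm (Fin n),
      if G.map π.toEmbedding = t then P G else 0) :
    (∑ G, ∑ π : Equiv.Perm (Fin n),
        if G.map π.toEmbedding = t ∧ π ⟨0, hn⟩ = u then P G else 0) /
      (∑ G, ∑ π : Equiv.Perm (Fin n),
        if G.map π.toEmbedding = t then P G else 0) =
    L u / ∑ v : Fin n, L v := by
  classical
  set r : Fin n := ⟨0, hn⟩ with hr
  set A : ℝ := (Fintype.card (autSub t) : ℝ) with hAdef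
  have hA0 : (0:ℝ) < A := by rw [hAdef]; exact_mod_cast Fintype.card_pos
  have hO : ∀ w : Fin n, (0:ℝ) < (Fintype.card (MulAction.orbit (autSub t) w) : ℝ) := by
    intro w
    have : Nonempty (MulAction.orbit (autSub t) w) := ⟨⟨w, MulAction.mem_orbit_self w⟩⟩
    exact_mod_cast Fintype.card_pos
  have key : ∀ (G : SimpleGraph (Fin n)) (w : Fin n),
      (∑ π : Equiv.Perm (Fin n), if G.map π.toEmbedding = t ∧ π r = w then P G else 0)
      = A * ((Fintype.card (MulAction.orbit (autSub t) w) : ℝ))⁻¹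
        * (if ∃ e : G ≃g t, e r = w then P G else 0) := by
    intro G w
    have hsum : (∑ π : Equiv.Perm (Fin n),
        if G.map π.toEmbedding = t ∧ π r = w then P G else 0)
        = ((Finset.univ.filter (fun π : Equiv.Perm (Fin n) =>
            G.map π.toEmbedding = t ∧ π r = w)).card : ℝ) * P G := by
      rw [← Finset.sum_filter, Finset.sum_const, nsmul_eq_mul]
    have hk := count_key t G r w
    have hkr : ((Finset.univ.filter (fun π : Equiv.Perm (Fin n) =>
          G.map π.toEmbedding = t ∧ π r = w)).card : ℝ)
          * (Fintype.card (MulAction.orbit (autSub t) w) : ℝ)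
        = A * (if ∃ e : G ≃g t, e r = w then 1 else 0) := by
      rw [hAdef]
      exact_mod_cast congrArg (Nat.cast : ℕ → ℝ) hk
    have hN : ((Finset.univ.filter (fun π : Equiv.Perm (Fin n) =>
          G.map π.toEmbedding = t ∧ π r = w)).card : ℝ)
        = A * (if ∃ e : G ≃g t, e r = w then 1 else 0)
          / (Fintype.card (MulAction.orbit (autSub t) w) : ℝ) := by
      rw [eq_div_iff (hO w).ne']
      exact hkr
    rw [hsum, hN]
    by_cases hc : ∃ e : G ≃g t, e r = w
    · simp only [hc, if_true, mul_one]
      ring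
    · simp [hc]
  have hLw : ∀ w : Fin n, L w = ((Fintype.card (MulAction.orbit (autSub t) w) : ℝ))⁻¹
      * ∑ G, (if ∃ e : G ≃g t, e r = w then P G else 0) := by
    intro w
    rw [hL w]
    congr 1
    · rw [show {v : Fin n | ∃ e : t ≃g t, e w = v} = MulAction.orbit (autSub t) w from
        orbit_eq t w, Nat.card_eq_fintype_card]
    · refine Finset.sum_congr rfl fun G _ => ?_
      by_cases hPG : P G = 0
      · simp [hPG]
      · exact if_congr (and_iff_right (hsupp G hPG)) rfl rfl
  have hnum : ∀ w : Fin n, (∑ G, ∑ π : Equiv.Perm (Fin n),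
      if G.map π.toEmbedding = t ∧ π r = w then P G else 0) = A * L w := by
    intro w
    rw [hLw w, Finset.sum_congr rfl fun G _ => key G w, ← Finset.mul_sum, mul_assoc]
  have hsplit : ∀ (G : SimpleGraph (Fin n)) (π : Equiv.Perm (Fin n)),
      (if G.map π.toEmbedding = t then P G else 0)
      = ∑ w : Fin n, if G.map π.toEmbedding = t ∧ π r = w then P G else 0 := by
    intro G π
    by_cases c : G.map π.toEmbedding = t
    · simp only [c, true_and, if_true]
      simp [Finset.sum_ite_eq]
    · simp only [c, false_and, if_false]
      simp
  have hden : (∑ G, ∑ π : Equiv.Perm (Fin n), if G.map π.toEmbedding = t then P G else 0)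
      = A * ∑ v : Fin n, L v := by
    calc (∑ G, ∑ π : Equiv.Perm (Fin n), if G.map π.toEmbedding = t then P G else 0)
        = ∑ G, ∑ π : Equiv.Perm (Fin n), ∑ w : Fin n,
            if G.map π.toEmbedding = t ∧ π r = w then P G else 0 := by
          exact Finset.sum_congr rfl fun G _ => Finset.sum_congr rfl fun π _ => hsplit G π
      _ = ∑ G, ∑ w : Fin n, ∑ π : Equiv.Perm (Fin n),
            if G.map π.toEmbedding = t ∧ π r = w then P G else 0 :=
          Finset.sum_congr rfl fun G _ => Finset.sum_comm
      _ = ∑ w : Fin n, ∑ G, ∑ π : Equiv.Perm (Fin n),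
            if G.map π.toEmbedding = t ∧ π r = w then P G else 0 := Finset.sum_comm
      _ = ∑ w : Fin n, A * L w := Finset.sum_congr rfl fun w _ => hnum w
      _ = A * ∑ v : Fin n, L v := by rw [Finset.mul_sum]
  rw [hnum u, hden, mul_div_mul_left _ _ hA0.ne']
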